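/- Let w > 0 and let ξ₁, ξ₂ : I → ℝ be differentiable functions on an interval I satisfying the system ξ₁'(s) = w²ξ₂(s)²/(1 + w²(ξ₁(s)² + ξ₂(s)²)) − 1 and ξ₂'(s) = −w²ξ₁(s)ξ₂(s)/(1 + w²(ξ₁(s)² + ξ₂(s)²)) for all s ∈ I. Then the function s ↦ ξ₂(s)/√(1 + w²ξ₁(s)²) is constant on I. -/

import Mathlib

/-- If `ξ₁, ξ₂` are differentiable on an interval `I` and satisfy the system
`ξ₁' = w²ξ₂²/(1 + w²(ξ₁² + ξ₂²)) − 1`, `ξ₂' = −w²ξ₁ξ₂/(1 + w²(ξ₁² + ξ₂²))` on `I`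
(with `w > 0` fixed), then the function `s ↦ ξ₂(s)/√(1 + w²ξ₁(s)²)` is constant on `I`. -/
theorem stmt14 (w : ℝ) (hw : 0 < w) (I : Set ℝ) (hI : I.OrdConnected)
    (ξ₁ ξ₂ : ℝ → ℝ)
    (h1 : ∀ s ∈ I, HasDerivWithinAt ξ₁
      (w ^ 2 * ξ₂ s ^ 2 / (1 + w ^ 2 * (ξ₁ s ^ 2 + ξ₂ s ^ 2)) - 1) I s)
    (h2 : ∀ s ∈ I, HasDerivWithinAt ξ₂
      (-(w ^ 2 * ξ₁ s * ξ₂ s / (1 + w ^ 2 * (ξ₁ s ^ 2 + ξ₂ s ^ 2)))) I s) :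
    ∀ s ∈ I, ∀ t ∈ I,
      ξ₂ s / Real.sqrt (1 + w ^ 2 * ξ₁ s ^ 2)
        = ξ₂ t / Real.sqrt (1 + w ^ 2 * ξ₁ t ^ 2) := by
  set g : ℝ → ℝ := fun s => ξ₂ s / Real.sqrt (1 + w ^ 2 * ξ₁ s ^ 2) with hg
  have hconv : Convex ℝ I := hI.convex
  have key : ∀ s ∈ I, HasDerivWithinAt g 0 I s := by
    intro s hs
    have hA : (0:ℝ) < 1 + w ^ 2 * ξ₁ s ^ 2 := by positivity
    have hD : (0:ℝ) < 1 + w ^ 2 * (ξ₁ s ^ 2 + ξ₂ s ^ 2) := by positivity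
    have hsA : Real.sqrt (1 + w ^ 2 * ξ₁ s ^ 2) ≠ 0 :=
      (Real.sqrt_pos.2 hA).ne'
    have hinner : HasDerivWithinAt (fun t => 1 + w ^ 2 * ξ₁ t ^ 2)
        (w ^ 2 * (2 * ξ₁ s * (w ^ 2 * ξ₂ s ^ 2 / (1 + w ^ 2 * (ξ₁ s ^ 2 + ξ₂ s ^ 2)) - 1)))
        I s := by
      have := (((h1 s hs).pow 2).const_mul (w ^ 2)).const_add 1
      exact this.congr_deriv (by ring)
    have hden : HasDerivWithinAt (fun t => Real.sqrt (1 + w ^ 2 * ξ₁ t ^ 2))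
        ((w ^ 2 * (2 * ξ₁ s * (w ^ 2 * ξ₂ s ^ 2 / (1 + w ^ 2 * (ξ₁ s ^ 2 + ξ₂ s ^ 2)) - 1)))
          / (2 * Real.sqrt (1 + w ^ 2 * ξ₁ s ^ 2))) I s :=
      hinner.sqrt hA.ne'
    have hq := (h2 s hs).div hden hsA
    refine hq.congr_deriv (Eq.symm ?_)
    have hsq : Real.sqrt (1 + w ^ 2 * ξ₁ s ^ 2) * Real.sqrt (1 + w ^ 2 * ξ₁ s ^ 2)
        = 1 + w ^ 2 * ξ₁ s ^ 2 := Real.mul_self_sqrt hA.le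
    field_simp
    linear_combination (w ^ 2 * ξ₁ s * ξ₂ s) * hsq
  intro s hs t ht
  have := hconv.norm_image_sub_le_of_norm_hasDerivWithin_le (C := 0)
    (fun x hx => key x hx) (fun x _ => by simp) ht hs
  have h0 : g s - g t = 0 := norm_le_zero_iff.1 (by simpa using this)
  exact sub_eq_zero.1 h0
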